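/- arXiv:1807.05594 — 4 statements merged into one kernel-verified Lean document; each statement's English description precedes it below -/
import Mathlib

section
/- For a nearest-neighbor random walk (S_k) on the integers with S_0 = 1, step +1 with probability p and -1 with probability 1-p, the probability that S_k ≥ 1 for all k ≤ 2n equals p^{2n} + Σ_{a=0}^{n-1} [C(2n, n+a) - C(2n, n+a+1)] p^{n+a} (1-p)^{n-a}. -/
open scoped Classical

/-- Position of a nearest-neighbor walk started at 1 after `k` steps given by `ε`
(`true` = step `+1`, `false` = step `-1`). -/
noncomputable def walkPos (n : ℕ) (ε : Fin n → Bool) (k : ℕ) : ℤ :=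
  1 + ∑ i : Fin n, if (i : ℕ) < k then (if ε i then (1 : ℤ) else -1) else 0

/-- Probability that the walk with up-probability `p` started at `1` satisfies
`S_k ≥ 1` for all `k ≤ 2n`. -/
noncomputable def stayPosProb (p : ℝ) (n : ℕ) : ℝ :=
  ∑ ε : Fin (2 * n) → Bool,
    if ∀ k ≤ 2 * n, 1 ≤ walkPos (2 * n) ε k then
      p ^ (Finset.univ.filter fun i => ε i = true).card *
        (1 - p) ^ (Finset.univ.filter fun i => ε i = false).card
    else 0

namespace SPP

def stp (b : Bool) : ℤ := if b then 1 else -1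

noncomputable def T (m : ℕ) (ε : Fin m → Bool) (k : ℕ) : ℤ :=
  ∑ i : Fin m, if (i : ℕ) < k then stp (ε i) else 0

lemma walkPos_eq (m : ℕ) (ε : Fin m → Bool) (k : ℕ) :
    walkPos m ε k = 1 + T m ε k := rfl

noncomputable def cnt (m : ℕ) (ε : Fin m → Bool) : ℕ :=
  (Finset.univ.filter fun i => ε i = true).card

lemma stp_not (b : Bool) : stp (!b) = - stp b := by cases b <;> simp [stp]

lemma T_zero (m : ℕ) (ε : Fin m → Bool) : T m ε 0 = 0 := by simp [T]

lemma T_succ (m : ℕ) (ε : Fin m → Bool) (k : ℕ) :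
    T m ε (k+1) = T m ε k + (if h : k < m then stp (ε ⟨k, h⟩) else 0) := by
  have hpt : ∀ i : Fin m, (if (i:ℕ) < k+1 then stp (ε i) else 0)
      = (if (i:ℕ) < k then stp (ε i) else 0) + (if (i:ℕ) = k then stp (ε i) else 0) := by
    intro i
    by_cases h1 : (i:ℕ) < k
    · have h2 : (i:ℕ) < k+1 := by omega
      have h3 : ¬ (i:ℕ) = k := by omega
      simp [h1, h2, h3]
    · by_cases h2 : (i:ℕ) = k
      · have h3 : (i:ℕ) < k+1 := by omega
        simp [h1, h2, h3]
      · have h3 : ¬ (i:ℕ) < k+1 := by omega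
        simp [h1, h2, h3]
  rw [T, Finset.sum_congr rfl fun i _ => hpt i, Finset.sum_add_distrib]
  congr 1
  by_cases h : k < m
  · rw [dif_pos h]
    rw [Finset.sum_eq_single (⟨k, h⟩ : Fin m)]
    · simp
    · intro b _ hb
      have : (b:ℕ) ≠ k := fun hc => hb (Fin.ext hc)
      simp [this]
    · simp
  · rw [dif_neg h]
    apply Finset.sum_eq_zero
    intro i _
    have : (i:ℕ) ≠ k := by omega
    simp [this]

lemma T_step (m : ℕ) (ε : Fin m → Bool) (k : ℕ) :
    T m ε (k+1) = T m ε k ∨ T m ε (k+1) = T m ε k + 1 ∨ T m ε (k+1) = T m ε k - 1 := by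
  rw [T_succ]
  by_cases h : k < m
  · rw [dif_pos h]; cases hb : ε ⟨k, h⟩ <;> simp [stp, hb] <;> ring_nf <;> tauto
  · rw [dif_neg h]; simp

lemma T_const (m : ℕ) (ε : Fin m → Bool) (k : ℕ) (h : m ≤ k) : T m ε k = T m ε m := by
  apply Finset.sum_congr rfl
  intro i _
  have h1 : (i:ℕ) < k := lt_of_lt_of_le i.2 h
  simp [h1, i.2]

lemma T_top (m : ℕ) (ε : Fin m → Bool) : T m ε m = 2 * (cnt m ε : ℤ) - m := by
  have h1 : T m ε m = ∑ i : Fin m, stp (ε i) := by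
    apply Finset.sum_congr rfl; intro i _; simp [i.2]
  have h2 : ∀ i : Fin m, stp (ε i) = 2 * (if ε i = true then (1:ℤ) else 0) - 1 := by
    intro i; cases h : ε i <;> simp [stp, h]
  rw [h1, Finset.sum_congr rfl fun i _ => h2 i, Finset.sum_sub_distrib, ← Finset.mul_sum,
    Finset.sum_boole]
  simp [cnt, Finset.card_univ]

def flip (m t : ℕ) (ε : Fin m → Bool) : Fin m → Bool :=
  fun i => if (i:ℕ) < t then !(ε i) else ε i

lemma flip_flip (m t : ℕ) (ε : Fin m → Bool) : flip m t (flip m t ε) = ε := by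
  funext i; by_cases h : (i:ℕ) < t <;> simp [flip, h]

lemma T_flip_le (m t : ℕ) (ε : Fin m → Bool) (k : ℕ) (h : k ≤ t) :
    T m (flip m t ε) k = - T m ε k := by
  rw [T, T, ← Finset.sum_neg_distrib]
  apply Finset.sum_congr rfl
  intro i _
  by_cases hik : (i:ℕ) < k
  · have hit : (i:ℕ) < t := lt_of_lt_of_le hik h
    simp [flip, hik, hit, stp_not]
  · simp [hik]

lemma T_flip_ge (m t : ℕ) (ε : Fin m → Bool) (k : ℕ) (h : t ≤ k) :
    T m (flip m t ε) k = T m ε k - 2 * T m ε t := by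
  rw [T, T, T, Finset.mul_sum, ← Finset.sum_sub_distrib]
  apply Finset.sum_congr rfl
  intro i _
  by_cases hit : (i:ℕ) < t
  · have hik : (i:ℕ) < k := lt_of_lt_of_le hit h
    simp [flip, hit, hik, stp_not]; ring
  · by_cases hik : (i:ℕ) < k <;> simp [flip, hit, hik]

lemma cnt_flip (m t : ℕ) (ε : Fin m → Bool) (ht : t ≤ m) :
    2 * (cnt m (flip m t ε) : ℤ) = 2 * (cnt m ε : ℤ) - 2 * T m ε t := by
  have := T_flip_ge m t ε m ht
  rw [T_top, T_top] at this
  omega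

lemma ivt (f : ℕ → ℤ)
    (hstep : ∀ k, f (k+1) = f k ∨ f (k+1) = f k + 1 ∨ f (k+1) = f k - 1)
    (c : ℤ) (k : ℕ) (h0 : f 0 ≤ c) (hk : c ≤ f k) : ∃ j ≤ k, f j = c := by
  induction k with
  | zero => exact ⟨0, le_refl _, le_antisymm h0 hk⟩
  | succ k ih =>
    by_cases h : c ≤ f k
    · obtain ⟨j, hj, hjc⟩ := ih h
      exact ⟨j, Nat.le_succ_of_le hj, hjc⟩
    · refine ⟨k+1, le_refl _, ?_⟩
      rcases hstep k with h1 | h1 | h1 <;> omega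

lemma hit_down (m : ℕ) (ε : Fin m → Bool) (k : ℕ) (hk : T m ε k ≤ -1) :
    ∃ j ≤ k, T m ε j = -1 := by
  obtain ⟨j, hj, hjc⟩ := ivt (fun j => - T m ε j)
    (by intro j; have := T_step m ε j; omega) 1 k
    (by show - T m ε 0 ≤ 1; simp [T_zero]) (by show (1:ℤ) ≤ - T m ε k; omega)
  exact ⟨j, hj, by omega⟩

lemma hit_up (m : ℕ) (ε : Fin m → Bool) (k : ℕ) (hk : 1 ≤ T m ε k) :
    ∃ j ≤ k, T m ε j = 1 :=
  ivt (T m ε) (T_step m ε) 1 k (by simp [T_zero]) hk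

def Good (m : ℕ) (ε : Fin m → Bool) : Prop := ∀ k ≤ m, 0 ≤ T m ε k

lemma good_iff (m : ℕ) (ε : Fin m → Bool) :
    (∀ k ≤ m, 1 ≤ walkPos m ε k) ↔ Good m ε := by
  constructor <;> intro h k hk <;> have := h k hk <;> rw [walkPos_eq] at * <;> omega

lemma not_good_iff (m : ℕ) (ε : Fin m → Bool) :
    ¬ Good m ε ↔ ∃ k, T m ε k = -1 := by
  constructor
  · intro h
    unfold Good at h
    push_neg at h
    obtain ⟨k, hk, hlt⟩ := h
    obtain ⟨j, _, hj⟩ := hit_down m ε k (by omega)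
    exact ⟨j, hj⟩
  · intro hex hg
    obtain ⟨k, hk⟩ := hex
    by_cases h : k ≤ m
    · have := hg k h; omega
    · have := hg m (le_refl m)
      rw [T_const m ε k (by omega)] at hk
      omega

lemma card_cnt (m k : ℕ) :
    (Finset.univ.filter fun ε : Fin m → Bool => cnt m ε = k).card = m.choose k := by
  have hpc : (Finset.powersetCard k (Finset.univ : Finset (Fin m))).card = m.choose k := by
    simp [Finset.card_powersetCard]
  rw [← hpc]
  apply Finset.card_bij (fun ε _ => Finset.univ.filter fun i => ε i = true)
  · intro ε hε
    simp only [Finset.mem_filter, Finset.mem_univ, true_and] at hε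
    rw [Finset.mem_powersetCard]
    exact ⟨Finset.filter_subset _ _, hε⟩
  · intro ε1 h1 ε2 h2 h
    funext i
    have := Finset.ext_iff.mp h i
    simp only [Finset.mem_filter, Finset.mem_univ, true_and] at this
    cases h1' : ε1 i <;> cases h2' : ε2 i <;> simp_all
  · intro s hs
    rw [Finset.mem_powersetCard] at hs
    refine ⟨fun i => decide (i ∈ s), ?_, ?_⟩
    · simp only [Finset.mem_filter, Finset.mem_univ, true_and]; simp only [cnt]
      have he : (Finset.univ.filter fun i => (decide (i ∈ s)) = true) = s := by
        ext i; simp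
      rw [he]; exact hs.2
    · ext i; simp

lemma prefix_nonneg (m : ℕ) (ε : Fin m → Bool) (h : ∃ k, T m ε k = -1)
    (j : ℕ) (hj : j < Nat.find h) : 0 ≤ T m ε j := by
  by_contra hc
  obtain ⟨j', hj', hj'c⟩ := hit_down m ε j (by omega)
  exact Nat.find_min h (by omega) hj'c

lemma prefix_nonpos (m : ℕ) (ε : Fin m → Bool) (h : ∃ k, T m ε k = 1)
    (j : ℕ) (hj : j < Nat.find h) : T m ε j ≤ 0 := by
  by_contra hc
  obtain ⟨j', hj', hj'c⟩ := hit_up m ε j (by omega)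
  exact Nat.find_min h (by omega) hj'c

lemma find_le_m_down (m : ℕ) (ε : Fin m → Bool) (h : ∃ k, T m ε k = -1) :
    Nat.find h ≤ m := by
  obtain ⟨k, hk⟩ := h
  by_cases hkm : k ≤ m
  · exact le_trans (Nat.find_le hk) hkm
  · have : T m ε m = -1 := by rw [← T_const m ε k (by omega)]; exact hk
    exact Nat.find_le this

lemma hi_aux (m k : ℕ) (ε : Fin m → Bool) (hc : cnt m ε = k)
    (pf : ∃ j, T m ε j = -1) :
    ¬ Good m (flip m (Nat.find pf) ε) ∨ True := Or.inr trivial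

lemma cnt_flip_down (m k : ℕ) (ε : Fin m → Bool) (hc : cnt m ε = k)
    (pf : ∃ j, T m ε j = -1) : cnt m (flip m (Nat.find pf) ε) = k + 1 := by
  have hTt : T m ε (Nat.find pf) = -1 := Nat.find_spec pf
  have htm : Nat.find pf ≤ m := find_le_m_down m ε pf
  have := cnt_flip m (Nat.find pf) ε htm
  rw [hTt] at this
  omega

lemma find_up_le (m k : ℕ) (hmk : m ≤ 2 * k) (η : Fin m → Bool) (hc : cnt m η = k + 1)
    (pf : ∃ j, T m η j = 1) : Nat.find pf ≤ m := by
  have htop : 1 ≤ T m η m := by rw [T_top, hc]; push_cast; omega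
  obtain ⟨j, hjm, hj⟩ := hit_up m η m htop
  exact le_trans (Nat.find_le hj) hjm

lemma hj_aux (m k : ℕ) (hmk : m ≤ 2 * k) (η : Fin m → Bool) (hc : cnt m η = k + 1)
    (pf : ∃ j, T m η j = 1) :
    ¬ Good m (flip m (Nat.find pf) η) ∧ cnt m (flip m (Nat.find pf) η) = k := by
  have hTs : T m η (Nat.find pf) = 1 := Nat.find_spec pf
  have hsm : Nat.find pf ≤ m := find_up_le m k hmk η hc pf
  constructor
  · rw [not_good_iff]
    exact ⟨Nat.find pf, by rw [T_flip_le m _ η _ (le_refl _), hTs]⟩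
  · have := cnt_flip m (Nat.find pf) η hsm
    rw [hTs] at this
    omega

lemma li_aux (m : ℕ) (ε : Fin m → Bool) (pf1 : ∃ j, T m ε j = -1)
    (pf2 : ∃ j, T m (flip m (Nat.find pf1) ε) j = 1) :
    flip m (Nat.find pf2) (flip m (Nat.find pf1) ε) = ε := by
  have hfe : Nat.find pf2 = Nat.find pf1 := by
    rw [Nat.find_eq_iff]
    constructor
    · rw [T_flip_le m _ ε _ (le_refl _), Nat.find_spec pf1]; ring
    · intro j hj
      rw [T_flip_le m _ ε j (le_of_lt hj)]
      have := prefix_nonneg m ε pf1 j hj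
      omega
  rw [hfe, flip_flip]

lemma ri_aux (m : ℕ) (η : Fin m → Bool) (pf1 : ∃ j, T m η j = 1)
    (pf2 : ∃ j, T m (flip m (Nat.find pf1) η) j = -1) :
    flip m (Nat.find pf2) (flip m (Nat.find pf1) η) = η := by
  have hfe : Nat.find pf2 = Nat.find pf1 := by
    rw [Nat.find_eq_iff]
    constructor
    · rw [T_flip_le m _ η _ (le_refl _), Nat.find_spec pf1]
    · intro j hj
      rw [T_flip_le m _ η j (le_of_lt hj)]
      have := prefix_nonpos m η pf1 j hj
      omega
  rw [hfe, flip_flip]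

lemma card_bad (m k : ℕ) (hmk : m ≤ 2 * k) :
    (Finset.univ.filter fun ε : Fin m → Bool => ¬ Good m ε ∧ cnt m ε = k).card
      = (Finset.univ.filter fun ε : Fin m → Bool => cnt m ε = k + 1).card := by
  have hex1 : ∀ η : Fin m → Bool, cnt m η = k + 1 → ∃ j, T m η j = 1 := by
    intro η hη
    have : 1 ≤ T m η m := by rw [T_top, hη]; push_cast; omega
    obtain ⟨j, _, hj⟩ := hit_up m η m this
    exact ⟨j, hj⟩
  refine Finset.card_bij'
    (fun ε hε => flip m (Nat.find ((not_good_iff m ε).mp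
      (by simpa using (Finset.mem_filter.mp hε).2.1))) ε)
    (fun η hη => flip m (Nat.find (hex1 η (by simpa using (Finset.mem_filter.mp hη).2))) η)
    ?_ ?_ ?_ ?_
  · intro ε hε
    simp only [Finset.mem_filter, Finset.mem_univ, true_and] at hε ⊢
    exact cnt_flip_down m k ε hε.2 _
  · intro η hη
    simp only [Finset.mem_filter, Finset.mem_univ, true_and] at hη ⊢
    exact hj_aux m k hmk η hη _
  · intro ε hε
    exact li_aux m ε _ _
  · intro η hη
    exact ri_aux m η _ _

lemma card_good (m k : ℕ) (hmk : m ≤ 2 * k) :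
    (Finset.univ.filter fun ε : Fin m → Bool => Good m ε ∧ cnt m ε = k).card
      + m.choose (k+1) = m.choose k := by
  rw [← card_cnt m k, ← card_cnt m (k+1), ← card_bad m k hmk]
  have h1 : (Finset.univ.filter fun ε : Fin m → Bool => Good m ε ∧ cnt m ε = k)
      = (Finset.univ.filter fun ε : Fin m → Bool => cnt m ε = k).filter (fun ε => Good m ε) := by
    rw [Finset.filter_filter]
    apply Finset.filter_congr; intro ε _; tauto
  have h2 : (Finset.univ.filter fun ε : Fin m → Bool => ¬ Good m ε ∧ cnt m ε = k)
      = (Finset.univ.filter fun ε : Fin m → Bool => cnt m ε = k).filter (fun ε => ¬ Good m ε) := by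
    rw [Finset.filter_filter]
    apply Finset.filter_congr; intro ε _; tauto
  rw [h1, h2]
  exact Finset.card_filter_add_card_filter_not _

lemma card_good_zero (m k : ℕ) (hmk : 2 * k < m) :
    (Finset.univ.filter fun ε : Fin m → Bool => Good m ε ∧ cnt m ε = k) = ∅ := by
  ext ε
  simp only [Finset.mem_filter, Finset.mem_univ, true_and, Finset.notMem_empty, iff_false]
  rintro ⟨hg, hc⟩
  have := hg m (le_refl m)
  rw [T_top, hc] at this
  omega

lemma cnt_le (m : ℕ) (ε : Fin m → Bool) : cnt m ε ≤ m := by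
  have := Finset.card_filter_le (Finset.univ : Finset (Fin m)) (fun i => ε i = true)
  simpa [cnt] using this

lemma cnt_false (m : ℕ) (ε : Fin m → Bool) :
    (Finset.univ.filter fun i => ε i = false).card = m - cnt m ε := by
  have h := Finset.card_filter_add_card_filter_not
    (s := (Finset.univ : Finset (Fin m))) (p := fun i => ε i = true)
  have he : (Finset.univ.filter fun i => ¬ (ε i = true)) = (Finset.univ.filter fun i => ε i = false) := by
    ext i; simp
  rw [he] at h
  have hu : (Finset.univ : Finset (Fin m)).card = m := by simp
  rw [hu] at h
  have := cnt_le m ε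
  unfold cnt at *
  omega

end SPP

theorem stayPosProb_eq (p : ℝ) (hp0 : 0 < p) (hp1 : p < 1) (n : ℕ) :
    stayPosProb p n =
      p ^ (2 * n) + ∑ a ∈ Finset.range n,
        (((2 * n).choose (n + a) : ℝ) - ((2 * n).choose (n + a + 1) : ℝ)) *
          p ^ (n + a) * (1 - p) ^ (n - a) := by
  classical
  set m := 2 * n with hm
  -- Step 1: rewrite as a sum over good paths
  have h1 : stayPosProb p n
      = ∑ ε ∈ Finset.univ.filter (fun ε : Fin m → Bool => SPP.Good m ε),
          p ^ SPP.cnt m ε * (1-p) ^ (m - SPP.cnt m ε) := by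
    rw [stayPosProb, Finset.sum_filter]
    apply Finset.sum_congr rfl
    intro ε _
    refine if_congr (SPP.good_iff m ε) ?_ rfl
    rw [SPP.cnt_false m ε]
    rfl
  -- Step 2: group by number of up-steps
  have h2 : (∑ ε ∈ Finset.univ.filter (fun ε : Fin m → Bool => SPP.Good m ε),
        p ^ SPP.cnt m ε * (1-p) ^ (m - SPP.cnt m ε))
      = ∑ k ∈ Finset.range (m+1),
          (((Finset.univ.filter fun ε : Fin m → Bool =>
              SPP.Good m ε ∧ SPP.cnt m ε = k).card : ℝ)) * (p ^ k * (1-p) ^ (m - k)) := by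
    rw [← Finset.sum_fiberwise_of_maps_to (g := SPP.cnt m) (t := Finset.range (m+1))
      (fun ε _ => Finset.mem_range.mpr (Nat.lt_succ_of_le (SPP.cnt_le m ε)))]
    apply Finset.sum_congr rfl
    intro k _
    rw [Finset.filter_filter]
    have hterm : ∀ ε ∈ Finset.univ.filter (fun ε : Fin m → Bool =>
        SPP.Good m ε ∧ SPP.cnt m ε = k),
        p ^ SPP.cnt m ε * (1-p) ^ (m - SPP.cnt m ε) = p ^ k * (1-p) ^ (m - k) := by
      intro ε hε
      simp only [Finset.mem_filter] at hε
      rw [hε.2.2]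
    rw [Finset.sum_congr rfl hterm, Finset.sum_const, nsmul_eq_mul]
  rw [h1, h2]
  -- Step 3: split the range and evaluate the counts
  have hsplit : m + 1 = n + (n + 1) := by omega
  rw [hsplit, Finset.sum_range_add]
  have hzero : ∀ k ∈ Finset.range n,
      (((Finset.univ.filter fun ε : Fin m → Bool =>
          SPP.Good m ε ∧ SPP.cnt m ε = k).card : ℝ)) * (p ^ k * (1-p) ^ (m - k)) = 0 := by
    intro k hk
    rw [Finset.mem_range] at hk
    rw [SPP.card_good_zero m k (by omega)]
    simp
  rw [Finset.sum_congr rfl hzero, Finset.sum_const, smul_zero, zero_add]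
  -- per-term evaluation for k = n + a
  have hterm : ∀ a ∈ Finset.range (n+1),
      (((Finset.univ.filter fun ε : Fin m → Bool =>
          SPP.Good m ε ∧ SPP.cnt m ε = n + a).card : ℝ)) * (p ^ (n+a) * (1-p) ^ (m - (n+a)))
      = ((m.choose (n + a) : ℝ) - (m.choose (n + a + 1) : ℝ)) * p ^ (n + a) * (1 - p) ^ (n - a) := by
    intro a ha
    rw [Finset.mem_range] at ha
    have hcard := SPP.card_good m (n + a) (by omega)
    have hcardR : (((Finset.univ.filter fun ε : Fin m → Bool =>
        SPP.Good m ε ∧ SPP.cnt m ε = n + a).card : ℝ))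
        = (m.choose (n + a) : ℝ) - (m.choose (n + a + 1) : ℝ) := by
      have := congrArg (fun x : ℕ => (x : ℝ)) hcard
      push_cast at this
      linarith
    have hexp : m - (n + a) = n - a := by omega
    rw [hcardR, hexp]
    ring
  rw [Finset.sum_congr rfl hterm]
  -- peel off the a = n term
  rw [Finset.sum_range_succ]
  have hlast : ((m.choose (n + n) : ℝ) - (m.choose (n + n + 1) : ℝ)) * p ^ (n + n) * (1 - p) ^ (n - n)
      = p ^ (2 * n) := by
    have h1 : m.choose (n + n) = 1 := by
      have : n + n = m := by omega
      rw [this, Nat.choose_self]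
    have h2 : m.choose (n + n + 1) = 0 := Nat.choose_eq_zero_of_lt (by omega)
    have h3 : n + n = 2 * n := by omega
    rw [h1, h2, h3]
    simp
  rw [hlast]
  ring
end

section
/- For a nearest-neighbor random walk started at 1 with up-probability p < 1/2, the probability q_n that the walk stays strictly positive for 2n steps satisfies q_n ≤ C_p · (4p(1-p))^n / n^{3/2} for some constant C_p > 0 depending only on p, for all n ≥ 1. -/
open scoped Classical

open Finset

noncomputable def ps (N : ℕ) (ε : Fin N → Bool) (k : ℕ) : ℤ :=
  ∑ i : Fin N, if (i : ℕ) < k then (if ε i then (1 : ℤ) else -1) else 0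

lemma ps_zero (N : ℕ) (ε : Fin N → Bool) : ps N ε 0 = 0 := by simp [ps]

lemma ps_stable (N : ℕ) (ε : Fin N → Bool) {k m : ℕ} (hN : N ≤ k) (hk : k ≤ m) :
    ps N ε m = ps N ε k := by
  refine Finset.sum_congr rfl fun i _ => ?_
  have : (i:ℕ) < k := lt_of_lt_of_le i.isLt hN
  rw [if_pos (lt_of_lt_of_le this hk), if_pos this]

lemma ps_succ (N : ℕ) (ε : Fin N → Bool) (k : ℕ) :
    ps N ε (k + 1) = ps N ε k + (if h : k < N then (if ε ⟨k, h⟩ then (1:ℤ) else -1) else 0) := by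
  classical
  rcases lt_or_ge k N with h | h
  · rw [dif_pos h]
    have key : ps N ε (k+1) - ps N ε k
        = ∑ i : Fin N, if i = (⟨k, h⟩ : Fin N) then (if ε i then (1:ℤ) else -1) else 0 := by
      rw [ps, ps, ← Finset.sum_sub_distrib]
      refine Finset.sum_congr rfl fun i _ => ?_
      by_cases he : i = (⟨k, h⟩ : Fin N)
      · subst he; simp
      · rw [if_neg he]
        by_cases hi : (i:ℕ) < k
        · rw [if_pos (Nat.lt_succ_of_lt hi), if_pos hi, sub_self]
        · have : ¬ (i:ℕ) < k+1 := by
            have : (i:ℕ) ≠ k := fun hh => he (Fin.ext hh)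
            omega
          rw [if_neg this, if_neg hi, sub_self]
    rw [Finset.sum_ite_eq' Finset.univ (⟨k, h⟩ : Fin N)] at key
    simp only [Finset.mem_univ, if_pos] at key
    linarith
  · rw [dif_neg (by omega), ps_stable N ε h (Nat.le_succ k), add_zero]

lemma ps_total (N : ℕ) (ε : Fin N → Bool) :
    ps N ε N = 2 * ((Finset.univ.filter fun i => ε i = true).card : ℤ) - N := by
  classical
  have : ps N ε N = ∑ i : Fin N, (if ε i then (1:ℤ) else -1) := by
    refine Finset.sum_congr rfl fun i _ => if_pos i.isLt
  rw [this]
  have : ∀ i : Fin N, (if ε i then (1:ℤ) else -1) = 2 * (if ε i = true then (1:ℤ) else 0) - 1 := by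
    intro i; by_cases h : ε i <;> simp [h]
  rw [Finset.sum_congr rfl fun i _ => this i, Finset.sum_sub_distrib, ← Finset.mul_sum]
  simp [Finset.sum_ite_eq, Finset.sum_boole, Finset.card_univ]

def flipPre (N m : ℕ) (ε : Fin N → Bool) : Fin N → Bool :=
  fun i => if (i : ℕ) < m then !(ε i) else ε i

lemma flipPre_flipPre (N m : ℕ) (ε : Fin N → Bool) : flipPre N m (flipPre N m ε) = ε := by
  funext i; unfold flipPre; by_cases h : (i:ℕ) < m <;> simp [h]

lemma ps_flipPre (N m : ℕ) (ε : Fin N → Bool) (k : ℕ) :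
    ps N (flipPre N m ε) k = ps N ε k - 2 * ps N ε (min k m) := by
  classical
  unfold ps
  rw [Finset.mul_sum, ← Finset.sum_sub_distrib]
  refine Finset.sum_congr rfl fun i _ => ?_
  unfold flipPre
  by_cases hk : (i:ℕ) < k
  · rw [if_pos hk, if_pos hk]
    by_cases hm : (i:ℕ) < m
    · rw [if_pos hm, if_pos (by omega : (i:ℕ) < min k m)]
      by_cases h : ε i <;> simp [h]
    · rw [if_neg hm, if_neg (by omega : ¬ (i:ℕ) < min k m)]
      ring
  · rw [if_neg hk, if_neg hk, if_neg (by omega : ¬ (i:ℕ) < min k m)]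
    ring

lemma ps_succ_le (N : ℕ) (ε : Fin N → Bool) (k : ℕ) :
    ps N ε (k + 1) ≤ ps N ε k + 1 := by
  rw [ps_succ]
  gcongr
  split_ifs <;> omega

section Reflect

variable (N : ℕ)

noncomputable def tc (ε : Fin N → Bool) : ℕ := (Finset.univ.filter fun i => ε i = true).card

lemma firstPassage (ε : Fin N → Bool) (h : ∃ k, 1 ≤ ps N ε k) :
    ps N ε (Nat.find h) = 1 ∧ (∀ k < Nat.find h, ps N ε k ≤ 0) := by
  have h2 : ∀ k < Nat.find h, ps N ε k ≤ 0 := fun k hk => by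
    have := Nat.find_min h hk; omega
  refine ⟨?_, h2⟩
  have h1 : 1 ≤ ps N ε (Nat.find h) := Nat.find_spec h
  have h0 : Nat.find h ≠ 0 := by
    intro hz
    rw [hz, ps_zero] at h1; omega
  obtain ⟨m, hm⟩ := Nat.exists_eq_succ_of_ne_zero h0
  rw [Nat.succ_eq_add_one] at hm
  have := ps_succ_le N ε m
  have := h2 m (by omega)
  rw [hm] at h1 ⊢
  omega

lemma reflect_card_le {t : ℕ} (ht : N + 2 ≤ 2 * t) :
    (Finset.univ.filter fun ε : Fin N → Bool => tc N ε = t).card ≤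
    (Finset.univ.filter fun ε : Fin N → Bool =>
      tc N ε = t - 1 ∧ ∃ k ≤ N, ps N ε k ≤ -1).card := by
  classical
  have hex : ∀ ε : Fin N → Bool, tc N ε = t → ∃ k, 1 ≤ ps N ε k := by
    intro ε hε
    exact ⟨N, by rw [ps_total]; unfold tc at hε; rw [hε]; push_cast; omega⟩
  refine Finset.card_le_card_of_injOn
    (fun ε => if h : ∃ k, 1 ≤ ps N ε k then flipPre N (Nat.find h) ε else ε) ?_ ?_
  · intro ε hε
    rw [Finset.mem_coe, Finset.mem_filter] at hε ⊢
    have hx := hex ε hε.2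
    dsimp only
    rw [dif_pos hx]
    set m := Nat.find hx with hmdef
    obtain ⟨hps1, _⟩ := firstPassage N ε hx
    have hmN : m ≤ N := Nat.find_le (by rw [ps_total]; unfold tc at hε; rw [hε.2]; push_cast; omega)
    have htot : ps N (flipPre N m ε) N = ps N ε N - 2 := by
      rw [ps_flipPre, min_eq_right hmN, hps1]; ring
    have htc : tc N (flipPre N m ε) = t - 1 := by
      have e1 := ps_total N (flipPre N m ε)
      have e2 := ps_total N ε
      unfold tc at hε ⊢
      rw [hε.2] at e2
      rw [e1, e2] at htot
      omega
    refine ⟨Finset.mem_univ _, htc, m, hmN, ?_⟩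
    rw [ps_flipPre, min_self, hps1]; omega
  · intro ε₁ h₁ ε₂ h₂ heq
    rw [Finset.mem_coe, Finset.mem_filter] at h₁ h₂
    have hx₁ := hex ε₁ h₁.2
    have hx₂ := hex ε₂ h₂.2
    dsimp only at heq
    rw [dif_pos hx₁, dif_pos hx₂] at heq
    -- show Nat.find hx₁ = Nat.find hx₂
    have key : ∀ (ε : Fin N → Bool) (hx : ∃ k, 1 ≤ ps N ε k)
        (hb : ∃ k, ps N (flipPre N (Nat.find hx) ε) k ≤ -1),
        Nat.find hb = Nat.find hx := by
      intro ε hx hb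
      obtain ⟨hps1, hlt⟩ := firstPassage N ε hx
      rw [Nat.find_eq_iff]
      constructor
      · rw [ps_flipPre, min_self, hps1]; omega
      · intro k hk
        rw [ps_flipPre, min_eq_left hk.le]
        have := hlt k hk
        omega
    have hb₁ : ∃ k, ps N (flipPre N (Nat.find hx₁) ε₁) k ≤ -1 := by
      refine ⟨Nat.find hx₁, ?_⟩
      rw [ps_flipPre, min_self, (firstPassage N ε₁ hx₁).1]; omega
    have hb₂ : ∃ k, ps N (flipPre N (Nat.find hx₂) ε₂) k ≤ -1 := by
      refine ⟨Nat.find hx₂, ?_⟩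
      rw [ps_flipPre, min_self, (firstPassage N ε₂ hx₂).1]; omega
    have e1 := key ε₁ hx₁ hb₁
    have e2 := key ε₂ hx₂ hb₂
    have : Nat.find hb₁ = Nat.find hb₂ := by
      congr 1
      rw [heq]
    have hfind : Nat.find hx₁ = Nat.find hx₂ := by rw [← e1, ← e2, this]
    calc ε₁ = flipPre N (Nat.find hx₁) (flipPre N (Nat.find hx₁) ε₁) :=
          (flipPre_flipPre _ _ _).symm
      _ = flipPre N (Nat.find hx₂) (flipPre N (Nat.find hx₂) ε₂) := by rw [hfind] at heq ⊢; rw [heq]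
      _ = ε₂ := flipPre_flipPre _ _ _

end Reflect

lemma card_tc_eq (N t : ℕ) :
    (Finset.univ.filter fun ε : Fin N → Bool => tc N ε = t).card = N.choose t := by
  classical
  have hch : N.choose t = (Finset.powersetCard t (Finset.univ : Finset (Fin N))).card := by
    rw [Finset.card_powersetCard, Finset.card_univ, Fintype.card_fin]
  rw [hch]
  refine Finset.card_bij (fun ε _ => Finset.univ.filter fun i => ε i = true) ?_ ?_ ?_
  · intro ε hε
    rw [Finset.mem_filter] at hε
    rw [Finset.mem_powersetCard]
    exact ⟨Finset.subset_univ _, hε.2⟩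
  · intro ε₁ h₁ ε₂ h₂ h
    funext i
    have := Finset.ext_iff.mp h i
    simp only [Finset.mem_filter, Finset.mem_univ, true_and] at this
    by_cases hb : ε₁ i
    · rw [hb, (this.mp hb).symm]
    · have : ¬ ε₂ i = true := fun hh => hb (this.mpr hh)
      simp only [Bool.not_eq_true] at hb this
      rw [hb, this]
  · intro S hS
    rw [Finset.mem_powersetCard] at hS
    refine ⟨fun i => i ∈ S, ?_, ?_⟩
    · rw [Finset.mem_filter]
      refine ⟨Finset.mem_univ _, ?_⟩
      unfold tc
      rw [← hS.2]
      congr 1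
      ext i
      simp
    · ext i
      simp

lemma good_count_le (n j : ℕ) (hj : j ≤ n) :
    (Finset.univ.filter fun ε : Fin (2*n) → Bool =>
      (∀ k ≤ 2*n, 0 ≤ ps (2*n) ε k) ∧ tc (2*n) ε = n + j).card * (n+1) ≤
    (2*j+1) * Nat.centralBinom n := by
  classical
  set N := 2*n
  set G := Finset.univ.filter fun ε : Fin N → Bool =>
      (∀ k ≤ N, 0 ≤ ps N ε k) ∧ tc N ε = n + j with hG
  set B := Finset.univ.filter fun ε : Fin N → Bool =>
      tc N ε = (n+j+1) - 1 ∧ ∃ k ≤ N, ps N ε k ≤ -1 with hB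
  have hdisj : Disjoint G B := by
    rw [Finset.disjoint_left]
    intro ε hg hb
    rw [hG, Finset.mem_filter] at hg
    rw [hB, Finset.mem_filter] at hb
    obtain ⟨k, hk, hps⟩ := hb.2.2
    have := hg.2.1 k hk
    omega
  have hsub : G ∪ B ⊆ Finset.univ.filter fun ε : Fin N → Bool => tc N ε = n + j := by
    intro ε hε
    rw [Finset.mem_union] at hε
    rw [Finset.mem_filter]
    rcases hε with h | h
    · rw [hG, Finset.mem_filter] at h; exact ⟨Finset.mem_univ _, h.2.2⟩
    · rw [hB, Finset.mem_filter] at h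
      refine ⟨Finset.mem_univ _, ?_⟩
      have := h.2.1
      omega
  have h1 : G.card + B.card ≤ N.choose (n+j) := by
    rw [← Finset.card_union_of_disjoint hdisj, ← card_tc_eq N (n+j)]
    exact Finset.card_le_card hsub
  have h2 : N.choose (n+j+1) ≤ B.card := by
    rw [← card_tc_eq N (n+j+1)]
    exact reflect_card_le N (by omega)
  have hid : N.choose (n+j+1) * (n+j+1) = N.choose (n+j) * (n - j) := by
    rw [Nat.choose_succ_right_eq]
    congr 1
    omega
  have hAj : N.choose (n+j) ≤ Nat.centralBinom n := by
    have := Nat.choose_le_middle (n+j) N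
    have hN2 : N / 2 = n := by omega
    rw [hN2] at this
    exact this
  -- G.card * (n+j+1) ≤ (2j+1) * choose N (n+j)
  have h3 : G.card * (n+j+1) ≤ (2*j+1) * N.choose (n+j) := by
    have : (G.card + N.choose (n+j+1)) * (n+j+1) ≤ N.choose (n+j) * (n+j+1) :=
      Nat.mul_le_mul_right _ (by omega)
    rw [add_mul, hid] at this
    have hle : N.choose (n+j) * (n - j) ≤ N.choose (n+j) * (n+j+1) := by
      apply Nat.mul_le_mul_left; omega
    nlinarith [Nat.sub_add_cancel hj]
  have h4 : (2*j+1) * N.choose (n+j) * (n+1) ≤ (2*j+1) * Nat.centralBinom n * (n+j+1) := by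
    calc (2*j+1) * N.choose (n+j) * (n+1) ≤ (2*j+1) * Nat.centralBinom n * (n+1) := by
          apply Nat.mul_le_mul_right; exact Nat.mul_le_mul_left _ hAj
      _ ≤ (2*j+1) * Nat.centralBinom n * (n+j+1) := by
          apply Nat.mul_le_mul_left; omega
  have h5 : G.card * (n+1) * (n+j+1) ≤ (2*j+1) * Nat.centralBinom n * (n+j+1) := by
    calc G.card * (n+1) * (n+j+1) = G.card * (n+j+1) * (n+1) := by ring
      _ ≤ (2*j+1) * N.choose (n+j) * (n+1) := Nat.mul_le_mul_right _ h3
      _ ≤ _ := h4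
  exact Nat.le_of_mul_le_mul_right h5 (by omega)

lemma centralBinom_real_bound (n : ℕ) :
    (Nat.centralBinom n : ℝ) * Real.sqrt (3*n+1) ≤ 4 ^ n := by
  induction n with
  | zero => simp [Nat.centralBinom]
  | succ n ih =>
    have hrec : ((n:ℝ) + 1) * (Nat.centralBinom (n+1) : ℝ)
        = 2 * (2*n+1) * (Nat.centralBinom n : ℝ) := by
      have := Nat.succ_mul_centralBinom_succ n
      have := congrArg (fun x : ℕ => (x : ℝ)) this
      push_cast at this
      linarith
    have hsq : (2*(n:ℝ)+1) * Real.sqrt (3*(n+1)+1) ≤ 2*((n:ℝ)+1) * Real.sqrt (3*n+1) := by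
      have h1 : (0:ℝ) ≤ 3*(n:ℝ)+4 := by positivity
      have h2 : ((2*(n:ℝ)+1) * Real.sqrt (3*(n+1)+1))^2 ≤ (2*((n:ℝ)+1) * Real.sqrt (3*n+1))^2 := by
        rw [mul_pow, mul_pow, Real.sq_sqrt (by positivity), Real.sq_sqrt (by positivity)]
        push_cast
        nlinarith [sq_nonneg ((n:ℝ))]
      have h3 : (0:ℝ) ≤ 2*((n:ℝ)+1) * Real.sqrt (3*n+1) := by positivity
      nlinarith [Real.sqrt_nonneg (3*((n:ℝ)+1)+1), Real.sqrt_nonneg (3*(n:ℝ)+1)]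
    have hCB : (0:ℝ) ≤ (Nat.centralBinom n : ℝ) := by positivity
    have key : ((n:ℝ)+1) * ((Nat.centralBinom (n+1) : ℝ) * Real.sqrt (3*((n:ℝ)+1)+1))
        ≤ ((n:ℝ)+1) * (4 ^ (n+1)) := by
      calc ((n:ℝ)+1) * ((Nat.centralBinom (n+1) : ℝ) * Real.sqrt (3*((n:ℝ)+1)+1))
          = (Nat.centralBinom n : ℝ) * (2*((2*(n:ℝ)+1) * Real.sqrt (3*((n:ℝ)+1)+1))) := by
            rw [← mul_assoc, hrec]; ring
        _ ≤ (Nat.centralBinom n : ℝ) * (2*(2*((n:ℝ)+1) * Real.sqrt (3*(n:ℝ)+1))) := by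
            refine mul_le_mul_of_nonneg_left ?_ hCB
            nlinarith [hsq]
        _ = 4*((n:ℝ)+1) * ((Nat.centralBinom n : ℝ) * Real.sqrt (3*(n:ℝ)+1)) := by ring
        _ ≤ 4*((n:ℝ)+1) * 4^n := by
            apply mul_le_mul_of_nonneg_left ih (by positivity)
        _ = ((n:ℝ)+1) * 4^(n+1) := by rw [pow_succ]; ring
    have hpos : (0:ℝ) < (n:ℝ)+1 := by positivity
    push_cast
    exact le_of_mul_le_mul_left key hpos

lemma geom_sum_bound {r : ℝ} (hr0 : 0 ≤ r) (hr1 : r < 1) (m : ℕ) :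
    ∑ j ∈ Finset.range m, (2*(j:ℝ)+1) * r^j ≤ 2/(1-r)^2 := by
  have hsummable : Summable (fun j : ℕ => ((j:ℝ)+1) * r^j) := by
    have h1 : Summable (fun j : ℕ => (j:ℝ) * r^j) := by
      have := summable_pow_mul_geometric_of_norm_lt_one 1 (by rwa [Real.norm_of_nonneg hr0] : ‖r‖ < 1)
      simpa using this
    have h2 : Summable (fun j : ℕ => r^j) := summable_geometric_of_lt_one hr0 hr1
    have := h1.add h2
    convert this using 2 with j
    ring
  have htsum : ∑' j : ℕ, ((j:ℝ)+1) * r^j = 1/(1-r)^2 := by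
    have h1 : ∑' j : ℕ, (j:ℝ) * r^j = r/(1-r)^2 :=
      tsum_coe_mul_geometric_of_norm_lt_one (by rwa [Real.norm_of_nonneg hr0])
    have h2 : ∑' j : ℕ, r^j = (1-r)⁻¹ := tsum_geometric_of_lt_one hr0 hr1
    have h1s : Summable (fun j : ℕ => (j:ℝ) * r^j) := by
      have := summable_pow_mul_geometric_of_norm_lt_one 1 (by rwa [Real.norm_of_nonneg hr0] : ‖r‖ < 1)
      simpa using this
    have h2s : Summable (fun j : ℕ => r^j) := summable_geometric_of_lt_one hr0 hr1
    have := Summable.tsum_add h1s h2s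
    simp only [h1, h2] at this
    rw [show (fun j : ℕ => ((j:ℝ)+1) * r^j) = fun j : ℕ => (j:ℝ)*r^j + r^j from funext fun j => by ring,
      this]
    have hne : (1:ℝ) - r ≠ 0 := by linarith
    field_simp
    ring
  calc ∑ j ∈ Finset.range m, (2*(j:ℝ)+1) * r^j
      ≤ ∑ j ∈ Finset.range m, 2*(((j:ℝ)+1) * r^j) := by
        apply Finset.sum_le_sum
        intro j _
        have : (0:ℝ) ≤ r^j := pow_nonneg hr0 j
        nlinarith
    _ = 2 * ∑ j ∈ Finset.range m, ((j:ℝ)+1) * r^j := by rw [Finset.mul_sum]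
    _ ≤ 2 * ∑' j : ℕ, ((j:ℝ)+1) * r^j := by
        apply mul_le_mul_of_nonneg_left _ (by norm_num)
        exact Summable.sum_le_tsum _ (fun j _ => by positivity) hsummable
    _ = 2/(1-r)^2 := by rw [htsum]; ring

lemma tc_le (N : ℕ) (ε : Fin N → Bool) : tc N ε ≤ N := by
  unfold tc
  calc (Finset.univ.filter fun i => ε i = true).card ≤ (Finset.univ : Finset (Fin N)).card :=
        Finset.card_le_card (Finset.filter_subset _ _)
    _ = N := by rw [Finset.card_univ, Fintype.card_fin]

lemma fc_eq (N : ℕ) (ε : Fin N → Bool) :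
    (Finset.univ.filter fun i => ε i = false).card = N - tc N ε := by
  classical
  have h := Finset.card_filter_add_card_filter_not
    (s := (Finset.univ : Finset (Fin N))) (p := fun i => ε i = true)
  have hcongr : (Finset.univ.filter fun i => ¬ ε i = true) =
      (Finset.univ.filter fun i => ε i = false) := by
    apply Finset.filter_congr
    intro i _
    simp
  rw [hcongr, Finset.card_univ, Fintype.card_fin] at h
  unfold tc
  omega

lemma stayPos_eq (p : ℝ) (n : ℕ) :
    stayPosProb p n = ∑ m ∈ Finset.range (2*n+1),
      ((Finset.univ.filter fun ε : Fin (2*n) → Bool =>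
        (∀ k ≤ 2*n, 0 ≤ ps (2*n) ε k) ∧ tc (2*n) ε = m).card : ℝ) *
        (p^m * (1-p)^(2*n-m)) := by
  classical
  unfold stayPosProb
  have hcond : ∀ ε : Fin (2*n) → Bool,
      (∀ k ≤ 2*n, 1 ≤ walkPos (2*n) ε k) ↔ (∀ k ≤ 2*n, 0 ≤ ps (2*n) ε k) := by
    intro ε
    constructor <;> intro h k hk <;> have := h k hk <;>
      simp only [walkPos, ps] at * <;> omega
  have hterm : ∀ ε : Fin (2*n) → Bool,
      (if ∀ k ≤ 2*n, 1 ≤ walkPos (2*n) ε k then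
        p ^ (Finset.univ.filter fun i => ε i = true).card *
          (1 - p) ^ (Finset.univ.filter fun i => ε i = false).card
      else 0)
      = if (∀ k ≤ 2*n, 0 ≤ ps (2*n) ε k) then p^(tc (2*n) ε) * (1-p)^(2*n - tc (2*n) ε) else 0 := by
    intro ε
    rw [if_congr (hcond ε) rfl rfl, fc_eq]
    rfl
  rw [Finset.sum_congr rfl fun ε _ => hterm ε, ← Finset.sum_filter]
  rw [← Finset.sum_fiberwise_of_maps_to (g := fun ε => tc (2*n) ε)
    (fun ε _ => Finset.mem_range.mpr (Nat.lt_succ_of_le (tc_le (2*n) ε)))]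
  refine Finset.sum_congr rfl fun m _ => ?_
  rw [Finset.filter_filter]
  have hc : ∀ ε ∈ Finset.filter
      (fun a => (∀ k ≤ 2*n, 0 ≤ ps (2*n) a k) ∧ tc (2*n) a = m) Finset.univ,
      p ^ tc (2*n) ε * (1-p) ^ (2*n - tc (2*n) ε) = p ^ m * (1-p) ^ (2*n - m) := by
    intro ε hε
    rw [Finset.mem_filter] at hε
    rw [hε.2.2]
  rw [Finset.sum_congr rfl hc, Finset.sum_const, nsmul_eq_mul]

theorem stayPosProb_upper_bound (p : ℝ) (hp0 : 0 < p) (hp : p < 1 / 2) :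
    ∃ C : ℝ, 0 < C ∧ ∀ n : ℕ, 1 ≤ n →
      stayPosProb p n ≤ C * (4 * p * (1 - p)) ^ n / (n : ℝ) ^ ((3 : ℝ) / 2) := by
  classical
  have h1p : 0 < 1 - p := by linarith
  set r := p / (1 - p) with hrdef
  have hr0 : 0 ≤ r := by positivity
  have hr1 : r < 1 := by rw [hrdef, div_lt_one h1p]; linarith
  have hr1' : 0 < 1 - r := by linarith
  refine ⟨2/(1-r)^2, by positivity, ?_⟩
  intro n hn
  have hnpos : (0:ℝ) < (n:ℝ) := by exact_mod_cast hn
  -- notation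
  set S : ℕ → ℕ := fun m => (Finset.univ.filter fun ε : Fin (2*n) → Bool =>
    (∀ k ≤ 2*n, 0 ≤ ps (2*n) ε k) ∧ tc (2*n) ε = m).card with hSdef
  have hstep1 : stayPosProb p n
      = ∑ m ∈ Finset.range (2*n+1), (S m : ℝ) * (p^m * (1-p)^(2*n-m)) := stayPos_eq p n
  -- terms with m < n vanish
  have hvanish : ∀ m < n, S m = 0 := by
    intro m hm
    rw [hSdef]
    rw [Finset.card_eq_zero, Finset.filter_eq_empty_iff]
    intro ε _
    intro hcontra
    obtain ⟨hgood, htc⟩ := hcontra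
    have h1 := hgood (2*n) le_rfl
    have h2 := ps_total (2*n) ε
    unfold tc at htc
    rw [htc] at h2
    omega
  have hsplit : ∑ m ∈ Finset.range (2*n+1), (S m : ℝ) * (p^m * (1-p)^(2*n-m))
      = ∑ j ∈ Finset.range (n+1), (S (n+j) : ℝ) * (p^(n+j) * (1-p)^(2*n-(n+j))) := by
    rw [Finset.range_eq_Ico,
      ← Finset.sum_Ico_consecutive _ (Nat.zero_le n) (by omega : n ≤ 2*n+1)]
    have hz : ∑ m ∈ Finset.Ico 0 n, (S m : ℝ) * (p^m * (1-p)^(2*n-m)) = 0 := by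
      apply Finset.sum_eq_zero
      intro m hm
      rw [Finset.mem_Ico] at hm
      rw [hvanish m hm.2]
      simp
    rw [hz, zero_add, Finset.sum_Ico_eq_sum_range]
    have h' : 2*n+1-n = n+1 := by omega
    rw [h']
  -- weight identity
  have hweight : ∀ j ≤ n, p^(n+j) * (1-p)^(2*n-(n+j)) = (p*(1-p))^n * r^j := by
    intro j hj
    obtain ⟨d, hd⟩ : ∃ d, n = j + d := ⟨n - j, by omega⟩
    subst hd
    have e1 : 2*(j+d)-((j+d)+j) = d := by omega
    have e2 : (j+d)+j = 2*j+d := by omega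
    rw [e1, e2, hrdef, div_pow, mul_pow]
    have hne : ((1:ℝ)-p)^j ≠ 0 := pow_ne_zero _ (ne_of_gt h1p)
    field_simp
    ring
  -- per-term bound
  have hCB : (0:ℝ) ≤ Nat.centralBinom n := by positivity
  have hterm : ∀ j ∈ Finset.range (n+1),
      (S (n+j) : ℝ) * (p^(n+j) * (1-p)^(2*n-(n+j)))
      ≤ ((2*(j:ℝ)+1) * Nat.centralBinom n / ((n:ℝ)+1)) * ((p*(1-p))^n * r^j) := by
    intro j hj
    rw [Finset.mem_range] at hj
    have hj' : j ≤ n := by omega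
    rw [hweight j hj']
    have hcard : (S (n+j) : ℝ) ≤ (2*(j:ℝ)+1) * Nat.centralBinom n / ((n:ℝ)+1) := by
      have h := good_count_le n j hj'
      rw [le_div_iff₀ (by positivity : (0:ℝ) < (n:ℝ)+1)]
      exact_mod_cast h
    apply mul_le_mul_of_nonneg_right hcard (by positivity)
  have hsum : stayPosProb p n ≤
      ((Nat.centralBinom n : ℝ) / ((n:ℝ)+1)) * ((p*(1-p))^n) * (2/(1-r)^2) := by
    rw [hstep1, hsplit]
    calc ∑ j ∈ Finset.range (n+1), (S (n+j) : ℝ) * (p^(n+j) * (1-p)^(2*n-(n+j)))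
        ≤ ∑ j ∈ Finset.range (n+1),
          ((2*(j:ℝ)+1) * Nat.centralBinom n / ((n:ℝ)+1)) * ((p*(1-p))^n * r^j) :=
          Finset.sum_le_sum hterm
      _ = ((Nat.centralBinom n : ℝ) / ((n:ℝ)+1)) * ((p*(1-p))^n) *
          ∑ j ∈ Finset.range (n+1), (2*(j:ℝ)+1) * r^j := by
          rw [Finset.mul_sum]
          refine Finset.sum_congr rfl fun j _ => by ring
      _ ≤ ((Nat.centralBinom n : ℝ) / ((n:ℝ)+1)) * ((p*(1-p))^n) * (2/(1-r)^2) := by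
          refine mul_le_mul_of_nonneg_left (geom_sum_bound hr0 hr1 (n+1)) (by positivity)
  have hrpow : (n:ℝ) ^ ((3:ℝ)/2) = (n:ℝ) * Real.sqrt n := by
    rw [show (3:ℝ)/2 = 1 + 1/2 by norm_num, Real.rpow_add hnpos, Real.rpow_one,
      Real.sqrt_eq_rpow]
  have hsqrtn : (0:ℝ) < Real.sqrt n := Real.sqrt_pos.mpr hnpos
  have hrpow_pos : (0:ℝ) < (n:ℝ)^((3:ℝ)/2) := by rw [hrpow]; positivity
  have hub : (Nat.centralBinom n : ℝ) / ((n:ℝ)+1) ≤ 4^n / (n:ℝ)^((3:ℝ)/2) := by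
    rw [div_le_div_iff₀ (by positivity) hrpow_pos]
    have hkey := centralBinom_real_bound n
    have hs : (n:ℝ)^((3:ℝ)/2) ≤ ((n:ℝ)+1) * Real.sqrt (3*(n:ℝ)+1) := by
      rw [hrpow]
      have h1 : Real.sqrt n ≤ Real.sqrt (3*(n:ℝ)+1) := Real.sqrt_le_sqrt (by linarith)
      nlinarith [Real.sqrt_nonneg ((n:ℝ)), Real.sqrt_nonneg (3*(n:ℝ)+1)]
    calc (Nat.centralBinom n : ℝ) * (n:ℝ)^((3:ℝ)/2)
        ≤ (Nat.centralBinom n : ℝ) * (((n:ℝ)+1) * Real.sqrt (3*(n:ℝ)+1)) :=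
          mul_le_mul_of_nonneg_left hs hCB
      _ = ((n:ℝ)+1) * ((Nat.centralBinom n : ℝ) * Real.sqrt (3*(n:ℝ)+1)) := by ring
      _ ≤ ((n:ℝ)+1) * 4^n := mul_le_mul_of_nonneg_left hkey (by positivity)
      _ = 4^n * ((n:ℝ)+1) := by ring
  calc stayPosProb p n
      ≤ ((Nat.centralBinom n : ℝ) / ((n:ℝ)+1)) * ((p*(1-p))^n) * (2/(1-r)^2) := hsum
    _ ≤ (4^n / (n:ℝ)^((3:ℝ)/2)) * ((p*(1-p))^n) * (2/(1-r)^2) := by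
        refine mul_le_mul_of_nonneg_right
          (mul_le_mul_of_nonneg_right hub (by positivity)) (by positivity)
    _ = 2/(1-r)^2 * (4*p*(1-p))^n / (n:ℝ)^((3:ℝ)/2) := by
        rw [show ((4:ℝ)*p*(1-p))^n = 4^n * (p*(1-p))^n by rw [← mul_pow]; ring_nf]
        field_simp
end

section
/- For a nearest-neighbor random walk started at 1 with up-probability p ∈ (0,1), the probability q_n that the walk stays strictly positive for 2n steps satisfies q_n ≥ c · (4p(1-p))^n / n^{3/2} for some absolute constant c > 0, for all n ≥ 1. -/
open scoped Classical

open DyckStep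

section Aux

lemma walk_sum_eq (l : List DyckStep) (m : ℕ) (hl : l.length = m) (k : ℕ) :
    ∑ i : Fin m, (if (i:ℕ) < k then (if l.getD i D = U then (1:ℤ) else -1) else 0)
      = ((l.take k).count U : ℤ) - ((l.take k).count D : ℤ) := by
  induction k with
  | zero => simp
  | succ k ih =>
    by_cases hk : k < m
    · have hsplit : ∀ i : Fin m, (if (i:ℕ) < k+1 then (if l.getD i D = U then (1:ℤ) else -1) else 0)
          = (if (i:ℕ) < k then (if l.getD i D = U then (1:ℤ) else -1) else 0)
            + (if (i:ℕ) = k then (if l.getD i D = U then (1:ℤ) else -1) else 0) := by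
        intro i
        set t := (if l.getD (i:ℕ) D = U then (1:ℤ) else -1) with ht
        rcases lt_trichotomy (i:ℕ) k with h | h | h
        · rw [if_pos (show (i:ℕ) < k+1 by omega), if_pos h, if_neg (show ¬(i:ℕ) = k by omega)]; ring
        · rw [if_pos (show (i:ℕ) < k+1 by omega), if_neg (show ¬(i:ℕ) < k by omega), if_pos h]; ring
        · rw [if_neg (show ¬(i:ℕ) < k+1 by omega), if_neg (show ¬(i:ℕ) < k by omega),
            if_neg (show ¬(i:ℕ) = k by omega)]; ring
      rw [Finset.sum_congr rfl (fun i _ => hsplit i), Finset.sum_add_distrib, ih]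
      have h2 : ∑ i : Fin m, (if (i:ℕ) = k then (if l.getD i D = U then (1:ℤ) else -1) else 0)
          = (if l.getD k D = U then (1:ℤ) else -1) := by
        rw [Fin.sum_univ_eq_sum_range (fun i => if i = k then (if l.getD i D = U then (1:ℤ) else -1) else 0) m,
          Finset.sum_ite_eq' (Finset.range m) k]
        rw [if_pos (Finset.mem_range.mpr hk)]
      rw [h2]
      have hkl : k < l.length := by omega
      have hgd : l.getD k D = l[k]'hkl := List.getD_eq_getElem l D hkl
      have htake : l.take (k+1) = l.take k ++ [l[k]'hkl] := by
        rw [List.take_succ, List.getElem?_eq_getElem hkl]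
        rfl
      rw [htake, List.count_append, List.count_append, hgd]
      rcases (l[k]'hkl).dichotomy with h | h <;> rw [h] <;> simp <;> ring
    · have h1 : ∀ i : Fin m, ((i:ℕ) < k+1) ↔ ((i:ℕ) < k) := by
        intro i; have := i.2; omega
      rw [Finset.sum_congr rfl (fun i _ => by rw [if_congr (h1 i) rfl rfl]), ih,
        List.take_of_length_le (show l.length ≤ k+1 by omega),
        List.take_of_length_le (show l.length ≤ k by omega)]

lemma sum_pm_eq (m : ℕ) (ε : Fin m → Bool) :
    ∑ i : Fin m, (if ε i then (1:ℤ) else -1)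
      = ((Finset.univ.filter fun i => ε i = true).card : ℤ)
        - ((Finset.univ.filter fun i => ε i = false).card : ℤ) := by
  have h : ∀ i : Fin m, (if ε i then (1:ℤ) else -1)
      = (if ε i = true then (1:ℤ) else 0) - (if ε i = false then (1:ℤ) else 0) := by
    intro i; cases hε : ε i <;> simp
  rw [Finset.sum_congr rfl (fun i _ => h i), Finset.sum_sub_distrib,
    Finset.sum_boole, Finset.sum_boole]

lemma card_true_add_card_false (m : ℕ) (ε : Fin m → Bool) :
    (Finset.univ.filter fun i => ε i = true).card
      + (Finset.univ.filter fun i => ε i = false).card = m := by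
  have := Finset.card_filter_add_card_filter_not
    (s := (Finset.univ : Finset (Fin m))) (p := fun i => ε i = true)
  rw [Finset.card_univ, Fintype.card_fin] at this
  simp only [Bool.not_eq_true] at this
  exact this

/-- The boolean step sequence associated to a Dyck word. -/
noncomputable def dwFun (n : ℕ) (w : {w : DyckWord // w.semilength = n}) :
    Fin (2 * n) → Bool :=
  fun i => decide (w.1.toList.getD (i : ℕ) D = U)

lemma dwFun_length (n : ℕ) (w : {w : DyckWord // w.semilength = n}) :
    w.1.toList.length = 2 * n := by
  rw [← DyckWord.two_mul_semilength_eq_length, w.2]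

lemma dwFun_if_eq (n : ℕ) (w : {w : DyckWord // w.semilength = n}) (i : Fin (2*n)) :
    (if dwFun n w i then (1:ℤ) else -1)
      = (if w.1.toList.getD (i:ℕ) D = U then (1:ℤ) else -1) := by
  simp [dwFun]

lemma dwFun_stays (n : ℕ) (w : {w : DyckWord // w.semilength = n}) :
    ∀ k ≤ 2 * n, 1 ≤ walkPos (2 * n) (dwFun n w) k := by
  intro k _
  unfold walkPos
  have := walk_sum_eq w.1.toList (2*n) (dwFun_length n w) k
  rw [Finset.sum_congr rfl (fun i _ => by rw [if_congr Iff.rfl (dwFun_if_eq n w i) rfl]), this]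
  have hle := w.1.count_D_le_count_U k
  have : ((w.1.toList.take k).count D : ℤ) ≤ ((w.1.toList.take k).count U : ℤ) := by
    exact_mod_cast hle
  omega

lemma dwFun_card_true (n : ℕ) (w : {w : DyckWord // w.semilength = n}) :
    (Finset.univ.filter fun i => dwFun n w i = true).card = n := by
  have h0 : ∑ i : Fin (2*n), (if dwFun n w i then (1:ℤ) else -1) = 0 := by
    have := walk_sum_eq w.1.toList (2*n) (dwFun_length n w) (2*n)
    rw [List.take_of_length_le (le_of_eq (dwFun_length n w))] at this
    have hall : ∀ i : Fin (2*n), (if (i:ℕ) < 2*n then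
        (if w.1.toList.getD (i:ℕ) D = U then (1:ℤ) else -1) else 0)
        = (if dwFun n w i then (1:ℤ) else -1) := by
      intro i
      rw [if_pos i.2, dwFun_if_eq]
    rw [← Finset.sum_congr rfl (fun i _ => hall i), this, w.1.count_U_eq_count_D, sub_self]
  rw [sum_pm_eq] at h0
  have h1 := card_true_add_card_false (2*n) (dwFun n w)
  omega

lemma dwFun_card_false (n : ℕ) (w : {w : DyckWord // w.semilength = n}) :
    (Finset.univ.filter fun i => dwFun n w i = false).card = n := by
  have h1 := card_true_add_card_false (2*n) (dwFun n w)
  have h2 := dwFun_card_true n w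
  omega

lemma dwFun_injective (n : ℕ) : Function.Injective (dwFun n) := by
  intro w w' h
  have hl : w.1.toList = w'.1.toList := by
    apply List.ext_getElem
    · rw [dwFun_length, dwFun_length]
    · intro i h1 h2
      have hi : i < 2 * n := by rw [← dwFun_length n w]; exact h1
      have := congrFun h ⟨i, hi⟩
      simp only [dwFun] at this
      rw [List.getD_eq_getElem _ _ h1, List.getD_eq_getElem _ _ h2] at this
      rcases (w.1.toList[i]'h1).dichotomy with hu | hu <;>
        rcases (w'.1.toList[i]'h2).dichotomy with hu' | hu' <;>
        rw [hu, hu'] <;> rw [hu, hu'] at this <;> simp_all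
  exact Subtype.ext (DyckWord.ext hl)

lemma stayPosProb_ge_catalan (p : ℝ) (hp0 : 0 < p) (hp1 : p < 1) (n : ℕ) :
    (catalan n : ℝ) * (p ^ n * (1 - p) ^ n) ≤ stayPosProb p n := by
  classical
  set f : (Fin (2*n) → Bool) → ℝ := fun ε =>
    if ∀ k ≤ 2 * n, 1 ≤ walkPos (2 * n) ε k then
      p ^ (Finset.univ.filter fun i => ε i = true).card *
        (1 - p) ^ (Finset.univ.filter fun i => ε i = false).card
    else 0 with hf
  have hnn : ∀ ε, 0 ≤ f ε := by
    intro ε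
    rw [hf]
    dsimp only
    split
    · exact mul_nonneg (pow_nonneg hp0.le _) (pow_nonneg (by linarith) _)
    · exact le_rfl
  set S : Finset (Fin (2*n) → Bool) := Finset.univ.image (dwFun n) with hS
  have hconst : ∀ ε ∈ S, f ε = p ^ n * (1 - p) ^ n := by
    intro ε hε
    rw [hS] at hε
    obtain ⟨w, -, rfl⟩ := Finset.mem_image.mp hε
    rw [hf]
    dsimp only
    rw [if_pos (dwFun_stays n w), dwFun_card_true, dwFun_card_false]
  have hcard : S.card = catalan n := by
    rw [hS, Finset.card_image_of_injective _ (dwFun_injective n), Finset.card_univ]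
    exact DyckWord.card_dyckWord_semilength_eq_catalan n
  have h1 : ∑ ε ∈ S, f ε ≤ ∑ ε : Fin (2*n) → Bool, f ε :=
    Finset.sum_le_sum_of_subset_of_nonneg (Finset.subset_univ S) (fun ε _ _ => hnn ε)
  have h2 : ∑ ε ∈ S, f ε = (catalan n : ℝ) * (p ^ n * (1 - p) ^ n) := by
    rw [Finset.sum_congr rfl hconst, Finset.sum_const, hcard, nsmul_eq_mul]
  rw [stayPosProb, ← hf]
  rw [← h2]
  exact h1

end Aux

lemma cb_lower (n : ℕ) (hn : 1 ≤ n) : 16 ^ n ≤ 4 * n * (Nat.centralBinom n)^2 := by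
  induction n, hn using Nat.le_induction with
  | base => simp [Nat.centralBinom]
  | succ n hn ih =>
    have key := Nat.succ_mul_centralBinom_succ n
    set a := Nat.centralBinom n with ha
    set b := Nat.centralBinom (n+1) with hb
    have : (n+1) * 16^(n+1) ≤ (n+1) * (4*(n+1)*b^2) := by
      calc (n+1) * 16^(n+1) = 16*(n+1)*16^n := by ring
        _ ≤ 16*(n+1)*(4*n*a^2) := Nat.mul_le_mul_left _ ih
        _ = 64*(n*(n+1))*a^2 := by ring
        _ ≤ 16*(2*n+1)^2*a^2 := by
            apply Nat.mul_le_mul_right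
            nlinarith
        _ = 4*(2*(2*n+1)*a)^2 := by ring
        _ = 4*((n+1)*b)^2 := by rw [key]
        _ = (n+1)*(4*(n+1)*b^2) := by ring
    exact Nat.le_of_mul_le_mul_left this (Nat.succ_pos n)

lemma catalan_lower (n : ℕ) (hn : 1 ≤ n) :
    (1/4 : ℝ) * 4^n / (n:ℝ)^((3:ℝ)/2) ≤ (catalan n : ℝ) := by
  have h1 : 16 ^ n ≤ 16 * n^3 * (catalan n)^2 := by
    calc 16^n ≤ 4 * n * (Nat.centralBinom n)^2 := cb_lower n hn
      _ = 4 * n * ((n+1) * catalan n)^2 := by rw [succ_mul_catalan_eq_centralBinom]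
      _ ≤ 4 * n * ((2*n) * catalan n)^2 := by
          apply Nat.mul_le_mul_left
          apply Nat.pow_le_pow_left
          apply Nat.mul_le_mul_right
          omega
      _ = 16 * n^3 * (catalan n)^2 := by ring
  have h1' : (16:ℝ) ^ n ≤ 16 * (n:ℝ)^3 * (catalan n : ℝ)^2 := by exact_mod_cast h1
  have hN : (0:ℝ) < (n:ℝ)^((3:ℝ)/2) := by
    apply Real.rpow_pos_of_pos
    exact_mod_cast hn
  have hN2 : ((n:ℝ)^((3:ℝ)/2))^(2:ℕ) = (n:ℝ)^(3:ℕ) := by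
    rw [← Real.rpow_natCast ((n:ℝ)^((3:ℝ)/2)) 2, ← Real.rpow_mul (Nat.cast_nonneg n),
      show ((3:ℝ)/2)*(2:ℕ) = ((3:ℕ):ℝ) by norm_num, Real.rpow_natCast]
  have hcat : (0:ℝ) ≤ (catalan n : ℝ) := Nat.cast_nonneg _
  have key : (4:ℝ)^n ≤ 4 * (catalan n : ℝ) * (n:ℝ)^((3:ℝ)/2) := by
    have hsq : ((4:ℝ)^n)^(2:ℕ) ≤ (4 * (catalan n : ℝ) * (n:ℝ)^((3:ℝ)/2))^(2:ℕ) := by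
      calc ((4:ℝ)^n)^(2:ℕ) = (16:ℝ)^n := by rw [← pow_mul, pow_mul']; norm_num
        _ ≤ 16 * (n:ℝ)^3 * (catalan n : ℝ)^2 := h1'
        _ = (4 * (catalan n : ℝ))^(2:ℕ) * ((n:ℝ)^((3:ℝ)/2))^(2:ℕ) := by rw [hN2]; ring
        _ = (4 * (catalan n : ℝ) * (n:ℝ)^((3:ℝ)/2))^(2:ℕ) := by ring
    have h4 : (0:ℝ) ≤ (4:ℝ)^n := by positivity
    have h5 : (0:ℝ) ≤ 4 * (catalan n : ℝ) * (n:ℝ)^((3:ℝ)/2) := by positivity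
    exact (pow_le_pow_iff_left₀ h4 h5 two_ne_zero).mp hsq
  rw [div_le_iff₀ hN]
  linarith

theorem stayPosProb_lower_bound :
    ∃ c : ℝ, 0 < c ∧ ∀ p : ℝ, 0 < p → p < 1 → ∀ n : ℕ, 1 ≤ n →
      c * (4 * p * (1 - p)) ^ n / (n : ℝ) ^ ((3 : ℝ) / 2) ≤ stayPosProb p n := by
  refine ⟨1/4, by norm_num, fun p hp0 hp1 n hn => ?_⟩
  have hnn : (0:ℝ) ≤ p ^ n * (1 - p) ^ n :=
    mul_nonneg (pow_nonneg hp0.le _) (pow_nonneg (by linarith) _)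
  calc (1/4 : ℝ) * (4 * p * (1 - p)) ^ n / (n : ℝ) ^ ((3 : ℝ) / 2)
      = ((1/4 : ℝ) * 4 ^ n / (n : ℝ) ^ ((3 : ℝ) / 2)) * (p ^ n * (1 - p) ^ n) := by
        rw [mul_pow, mul_pow]; ring
    _ ≤ (catalan n : ℝ) * (p ^ n * (1 - p) ^ n) :=
        mul_le_mul_of_nonneg_right (catalan_lower n hn) hnn
    _ ≤ stayPosProb p n := stayPosProb_ge_catalan p hp0 hp1 n
end

section
/- Fix p ∈ (0,1) and ε > 0. There exists M such that for all n, m > M: with T_n as the sum of t_0 = m plus n i.i.d. variables each 0 w.p. p and m w.p. 1-p, P(T_n ≤ n+1) ≤ (p + ε)^n. -/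
open scoped Classical
open Finset

theorem lemma_tau (p : ℝ) (hp0 : 0 < p) (hp1 : p < 1) (ε : ℝ) (hε : 0 < ε) :
    ∃ M : ℕ, ∀ n m : ℕ, M < n → M < m →
      (∑ v : Fin n → Bool,
          if (m : ℝ) + ∑ i, (if v i then (m : ℝ) else 0) ≤ (n : ℝ) + 1 then
            ∏ i, (if v i then 1 - p else p)
          else 0)
        ≤ (p + ε) ^ n := by
  set t : ℝ := 2 / ε + 1 with ht_def
  have ht1 : 1 < t := by
    have : 0 < 2 / ε := by positivity
    rw [ht_def]
    linarith
  have ht0 : 0 < t := lt_trans one_pos ht1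
  set r : ℝ := (p + ε) / (p + ε / 2) with hr_def
  have hpe2 : 0 < p + ε / 2 := by linarith
  have hr1 : 1 < r := (one_lt_div hpe2).2 (by linarith)
  have hr0 : 0 < r := lt_trans one_pos hr1
  obtain ⟨M, hM⟩ := pow_unbounded_of_one_lt (t ^ 2) hr1
  refine ⟨M, fun n m hn hm => ?_⟩
  have hm0 : (0 : ℝ) < m := by
    have : 0 < m := by omega
    exact_mod_cast this
  have hn1 : (1 : ℝ) ≤ n := by
    have : 1 ≤ n := by omega
    exact_mod_cast this
  set α : ℝ := ((n : ℝ) + 1) / m with hα_def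
  have hα0 : 0 ≤ α := by positivity
  have htα : (0 : ℝ) < t ^ α := Real.rpow_pos_of_pos ht0 α
  -- pointwise bound
  have key : ∀ v : Fin n → Bool,
      (if (m : ℝ) + ∑ i, (if v i then (m : ℝ) else 0) ≤ (n : ℝ) + 1 then
          ∏ i, (if v i then 1 - p else p)
        else 0)
      ≤ t ^ α * ∏ i, (if v i then (1 - p) / t else p) := by
    intro v
    have hprodnn : 0 ≤ ∏ i, (if v i then (1 - p) / t else p) := by
      refine prod_nonneg fun i _ => ?_
      split
      · have : 0 ≤ 1 - p := by linarith
        positivity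
      · exact hp0.le
    split_ifs with hcond
    · set c := (univ.filter fun i => v i = true).card with hc_def
      have hsum : ∑ i, (if v i then (m : ℝ) else 0) = (c : ℝ) * m := by
        rw [← Finset.sum_filter, Finset.sum_const, nsmul_eq_mul]
      have hc : (c : ℝ) ≤ α := by
        rw [hα_def, le_div_iff₀ hm0]
        rw [hsum] at hcond
        linarith
      have hprod_eq : ∏ i, (if v i then 1 - p else p)
          = t ^ c * ∏ i, (if v i then (1 - p) / t else p) := by
        have h1 : ∀ i : Fin n, (if v i then 1 - p else p)
            = (if v i then t else 1) * (if v i then (1 - p) / t else p) := by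
          intro i
          split
          · field_simp
          · rw [one_mul]
        rw [Finset.prod_congr rfl (fun i _ => h1 i), Finset.prod_mul_distrib,
          ← Finset.prod_filter, Finset.prod_const]
      rw [hprod_eq]
      refine mul_le_mul_of_nonneg_right ?_ hprodnn
      rw [← Real.rpow_natCast t c]
      exact Real.rpow_le_rpow_of_exponent_le ht1.le hc
    · positivity
  have hsum_eq : ∑ v : Fin n → Bool, ∏ i, (if v i then (1 - p) / t else p)
      = ((1 - p) / t + p) ^ n := by
    rw [← Fintype.sum_pow (fun b : Bool => if b then (1 - p) / t else p) n]
    simp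
  have hta : t ^ α ≤ r ^ n := by
    have hm' : (M : ℝ) + 1 ≤ m := by exact_mod_cast hm
    have h2 : α ≤ 2 * (n : ℝ) / ((M : ℝ) + 1) := by
      rw [hα_def, div_le_div_iff₀ hm0 (by positivity)]
      nlinarith [mul_le_mul_of_nonneg_left hm' (by positivity : (0:ℝ) ≤ 2 * (n:ℝ))]
    have e1 : t ^ (2 * (n : ℝ) / ((M : ℝ) + 1)) = (t ^ 2) ^ ((n : ℝ) / ((M : ℝ) + 1)) := by
      rw [← Real.rpow_natCast t 2, ← Real.rpow_mul ht0.le]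
      congr 1
      push_cast
      ring
    have e2 : ((r ^ (M + 1) : ℝ)) ^ ((n : ℝ) / ((M : ℝ) + 1)) = r ^ n := by
      rw [← Real.rpow_natCast r (M + 1), ← Real.rpow_mul hr0.le, ← Real.rpow_natCast r n]
      congr 1
      have hM1 : ((M : ℝ) + 1) ≠ 0 := by positivity
      push_cast
      field_simp
    calc t ^ α ≤ t ^ (2 * (n : ℝ) / ((M : ℝ) + 1)) :=
          Real.rpow_le_rpow_of_exponent_le ht1.le h2
      _ = (t ^ 2) ^ ((n : ℝ) / ((M : ℝ) + 1)) := e1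
      _ ≤ ((r ^ (M + 1) : ℝ)) ^ ((n : ℝ) / ((M : ℝ) + 1)) := by
          refine Real.rpow_le_rpow (by positivity) ?_ (by positivity)
          exact le_of_lt (lt_of_lt_of_le hM (pow_le_pow_right₀ hr1.le (Nat.le_succ M)))
      _ = r ^ n := e2
  have hbase : (1 - p) / t + p ≤ p + ε / 2 := by
    have h1 : (1 - p) / t ≤ 1 / t := by
      gcongr
      linarith
    have h2 : 1 / t < ε / 2 := by
      rw [div_lt_div_iff₀ ht0 two_pos]
      have he : ε * t = 2 + ε := by
        rw [ht_def]
        field_simp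
      linarith
    linarith
  calc (∑ v : Fin n → Bool,
          if (m : ℝ) + ∑ i, (if v i then (m : ℝ) else 0) ≤ (n : ℝ) + 1 then
            ∏ i, (if v i then 1 - p else p)
          else 0)
      ≤ ∑ v : Fin n → Bool, t ^ α * ∏ i, (if v i then (1 - p) / t else p) :=
        Finset.sum_le_sum fun v _ => key v
    _ = t ^ α * ((1 - p) / t + p) ^ n := by rw [← Finset.mul_sum, hsum_eq]
    _ ≤ r ^ n * (p + ε / 2) ^ n := by
        have hnn : 0 ≤ (1 - p) / t + p := add_nonneg (div_nonneg (by linarith) ht0.le) hp0.le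
        exact mul_le_mul hta (pow_le_pow_left₀ hnn hbase n) (pow_nonneg hnn n) (by positivity)
    _ = (p + ε) ^ n := by
        rw [← mul_pow, hr_def, div_mul_cancel₀ _ hpe2.ne']
end
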